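/- Let A be an n×n symmetric, entrywise nonnegative, irreducible matrix with Q_NG the Newman–Girvan modularity function of A, let S ⊆ {1,…,n}, let i ∈ S and j ∉ S, let ε > 0, and let A' = A + ε·(e_i e_jᵀ + e_j e_iᵀ) with Newman–Girvan modularity function Q'_NG. Then Q'_NG(S) − Q_NG(S) = −(2ε·vol S·(vol G − vol S) + ε²·vol G)/(vol G·(vol G + 2ε)); in particular Q'_NG(S) < Q_NG(S). -/

import Mathlib

open Matrix BigOperators

/-- A nonnegative square matrix is irreducible if for every pair of indices `(i, j)`
there is a positive power `k` with `(A ^ k) i j > 0`. -/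
def Matrix.Irreducible {n : ℕ} (A : Matrix (Fin n) (Fin n) ℝ) : Prop :=
  ∀ i j, ∃ k : ℕ, 0 < k ∧ 0 < (A ^ k) i j

/-- The characteristic vector `𝟙_S` of a set of indices. -/
noncomputable def charVec {n : ℕ} (S : Finset (Fin n)) : Fin n → ℝ :=
  fun i => if i ∈ S then 1 else 0

/-- The degree vector `d = A·𝟙`. -/
noncomputable def degVec {n : ℕ} (A : Matrix (Fin n) (Fin n) ℝ) : Fin n → ℝ :=
  A *ᵥ (fun _ => 1)

/-- The volume of the graph, `vol G = 𝟙ᵀ d`. -/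
noncomputable def volG {n : ℕ} (A : Matrix (Fin n) (Fin n) ℝ) : ℝ :=
  ∑ i, degVec A i

/-- The volume of a vertex subset, `vol S = ∑_{i ∈ S} d_i`. -/
noncomputable def volS {n : ℕ} (A : Matrix (Fin n) (Fin n) ℝ) (S : Finset (Fin n)) : ℝ :=
  ∑ i ∈ S, degVec A i

/-- The Newman–Girvan modularity matrix `M_NG = A - (1 / vol G) · d dᵀ`. -/
noncomputable def ngMatrix {n : ℕ} (A : Matrix (Fin n) (Fin n) ℝ) :
    Matrix (Fin n) (Fin n) ℝ :=
  A - (volG A)⁻¹ • vecMulVec (degVec A) (degVec A)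

/-- The Newman–Girvan modularity function `Q_NG(S) = 𝟙_Sᵀ M_NG 𝟙_S`. -/
noncomputable def ngQ {n : ℕ} (A : Matrix (Fin n) (Fin n) ℝ) (S : Finset (Fin n)) : ℝ :=
  charVec S ⬝ᵥ (ngMatrix A *ᵥ charVec S)

lemma quad_charVec {n : ℕ} (M : Matrix (Fin n) (Fin n) ℝ) (S : Finset (Fin n)) :
    charVec S ⬝ᵥ (M *ᵥ charVec S) = ∑ a ∈ S, ∑ b ∈ S, M a b := by
  simp [dotProduct, mulVec, charVec, mul_ite, ite_mul, Finset.sum_ite_mem,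
    Finset.univ_inter]

lemma ngQ_eq {n : ℕ} (A : Matrix (Fin n) (Fin n) ℝ) (S : Finset (Fin n)) :
    ngQ A S = (∑ a ∈ S, ∑ b ∈ S, A a b) - (volG A)⁻¹ * (volS A S)^2 := by
  rw [ngQ, ngMatrix, sub_mulVec, dotProduct_sub, quad_charVec, smul_mulVec,
    dotProduct_smul, quad_charVec]
  congr 1
  rw [smul_eq_mul]
  congr 1
  rw [volS, sq, Finset.sum_mul_sum]
  simp [vecMulVec_apply]

lemma deg_nonneg {n : ℕ} (A : Matrix (Fin n) (Fin n) ℝ) (hApos : ∀ i j, 0 ≤ A i j)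
    (l : Fin n) : 0 ≤ degVec A l := by
  simp only [degVec, mulVec, dotProduct, mul_one]
  exact Finset.sum_nonneg fun m _ => hApos l m

lemma deg_pos {n : ℕ} (A : Matrix (Fin n) (Fin n) ℝ) (hApos : ∀ i j, 0 ≤ A i j)
    (hAirr : A.Irreducible) (i : Fin n) : 0 < degVec A i := by
  rcases lt_or_eq_of_le (deg_nonneg A hApos i) with h | h
  · exact h
  exfalso
  have hz : ∀ m, A i m = 0 := by
    intro m
    have := (Finset.sum_eq_zero_iff_of_nonneg (fun m _ => hApos i m)).mp ?_ m (Finset.mem_univ m)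
    · exact this
    · simpa [degVec, mulVec, dotProduct] using h.symm
  obtain ⟨k, hk, hpos⟩ := hAirr i i
  obtain ⟨m, rfl⟩ := Nat.exists_eq_succ_of_ne_zero hk.ne'
  have : (A ^ (m + 1)) i i = 0 := by
    rw [pow_succ']
    simp [Matrix.mul_apply, hz]
  linarith

theorem stmt16 {n : ℕ} (A : Matrix (Fin n) (Fin n) ℝ)
    (hA : A.IsHermitian) (hApos : ∀ i j, 0 ≤ A i j) (hAirr : A.Irreducible)
    (S : Finset (Fin n)) (i j : Fin n) (hiS : i ∈ S) (hjS : j ∉ S)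
    (ε : ℝ) (hε : 0 < ε)
    (A' : Matrix (Fin n) (Fin n) ℝ)
    (hA' : A' = A + Matrix.single i j ε + Matrix.single j i ε) :
    ngQ A' S - ngQ A S =
      -((2 * ε * volS A S * (volG A - volS A S) + ε ^ 2 * volG A) /
        (volG A * (volG A + 2 * ε))) ∧
    ngQ A' S < ngQ A S := by
  have hd' : ∀ l, degVec A' l
      = degVec A l + (if i = l then ε else 0) + (if j = l then ε else 0) := by
    intro l
    simp [hA', degVec, mulVec, dotProduct, Matrix.single,
      Finset.sum_add_distrib, Finset.sum_ite_eq, ite_and]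
  have hvG' : volG A' = volG A + 2 * ε := by
    simp only [volG, hd']
    rw [Finset.sum_add_distrib, Finset.sum_add_distrib]
    simp [Finset.sum_ite_eq]
    ring
  have hvS' : volS A' S = volS A S + ε := by
    simp only [volS, hd']
    rw [Finset.sum_add_distrib, Finset.sum_add_distrib]
    simp [Finset.sum_ite_eq, hiS, hjS]
  have hsum : (∑ a ∈ S, ∑ b ∈ S, A' a b) = ∑ a ∈ S, ∑ b ∈ S, A a b := by
    refine Finset.sum_congr rfl fun a ha => Finset.sum_congr rfl fun b hb => ?_
    have hja : j ≠ a := fun h => hjS (h ▸ ha)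
    have hjb : j ≠ b := fun h => hjS (h ▸ hb)
    simp [hA', Matrix.single, Matrix.add_apply, ite_and, hja, hjb]
  have hvG : 0 < volG A :=
    Finset.sum_pos' (fun l _ => deg_nonneg A hApos l)
      ⟨i, Finset.mem_univ i, deg_pos A hApos hAirr i⟩
  have hvS0 : 0 ≤ volS A S := Finset.sum_nonneg fun l _ => deg_nonneg A hApos l
  have hle : volS A S ≤ volG A :=
    Finset.sum_le_sum_of_subset_of_nonneg (Finset.subset_univ S)
      (fun l _ _ => deg_nonneg A hApos l)
  have hvG2 : (0:ℝ) < volG A + 2 * ε := by linarith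
  have key : ngQ A' S - ngQ A S =
      -((2 * ε * volS A S * (volG A - volS A S) + ε ^ 2 * volG A) /
        (volG A * (volG A + 2 * ε))) := by
    rw [ngQ_eq, ngQ_eq, hsum, hvG', hvS']
    field_simp
    ring
  refine ⟨key, ?_⟩
  have hnum : 0 < 2 * ε * volS A S * (volG A - volS A S) + ε ^ 2 * volG A := by
    have h1 : 0 ≤ 2 * ε * volS A S * (volG A - volS A S) :=
      mul_nonneg (mul_nonneg (by linarith) hvS0) (by linarith)
    have h2 : 0 < ε ^ 2 * volG A := by positivity
    linarith
  have : 0 < (2 * ε * volS A S * (volG A - volS A S) + ε ^ 2 * volG A) /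
      (volG A * (volG A + 2 * ε)) := div_pos hnum (mul_pos hvG hvG2)
  linarith
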